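/- Let f, g, h, ℓ : [a,b] → ℝ≥0 with f and ℓ nonnegative and nondecreasing, g, h ∈ L¹([a,b]), and suppose f(t) ≤ ℓ(t) + ∫_a^t g(s) f(s) ds + (∫_a^t h(s) f(s)² ds)^{1/2} for all t ∈ [a,b], with f bounded. Then there is an explicit bound of the form f(t) ≤ C·ℓ(t)·exp(C'·(∫_a^b g + ∫_a^b h)) for absolute constants C, C' (e.g., f(b) ≤ 4 ℓ(b) e^{4∫g + 8∫h} when the data are constants as in the application). -/

import Mathlib

open MeasureTheory intervalIntegral Set


theorem gronwall_aux (a b : ℝ) (hab : a ≤ b) (f L φ : ℝ → ℝ)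
    (hf0 : ∀ t ∈ Icc a b, 0 ≤ f t) (hfmono : MonotoneOn f (Icc a b))
    (hL0 : ∀ t ∈ Icc a b, 0 ≤ L t) (hLmono : MonotoneOn L (Icc a b))
    (hφ0 : ∀ t ∈ Icc a b, 0 ≤ φ t)
    (hφ : IntegrableOn φ (Icc a b))
    (hφf : IntegrableOn (fun s => φ s * f s) (Icc a b))
    (hineq : ∀ t ∈ Icc a b, f t ≤ L t + ∫ s in a..t, φ s * f s) :
    ∀ t ∈ Icc a b, f t ≤ 2 * L t * Real.exp (2 * ∫ s in a..b, φ s) := by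
  set Φ : ℝ → ℝ := fun t => ∫ s in a..t, φ s with hΦdef
  -- basic integrability on subintervals
  have hint : ∀ {c d : ℝ}, c ∈ Icc a b → d ∈ Icc a b → IntervalIntegrable φ volume c d :=
    fun hc hd => (hφ.mono_set (uIcc_subset_Icc hc hd)).intervalIntegrable
  have hintf : ∀ {c d : ℝ}, c ∈ Icc a b → d ∈ Icc a b →
      IntervalIntegrable (fun s => φ s * f s) volume c d :=
    fun hc hd => (hφf.mono_set (uIcc_subset_Icc hc hd)).intervalIntegrable
  have hmem : ∀ {c d t : ℝ}, c ∈ Icc a b → d ∈ Icc a b → t ∈ Icc c d → t ∈ Icc a b :=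
    fun hc hd ht => ⟨hc.1.trans ht.1, ht.2.trans hd.2⟩
  -- Φ basic properties
  have hΦsub : ∀ {c d : ℝ}, c ∈ Icc a b → d ∈ Icc a b → Φ d - Φ c = ∫ s in c..d, φ s := by
    intro c d hc hd
    have := integral_add_adjacent_intervals (hint (left_mem_Icc.2 hab) hc)
      (hint hc hd)
    simp only [hΦdef]
    linarith [this]
  have hΦmono : MonotoneOn Φ (Icc a b) := by
    intro c hc d hd hcd
    have h1 : Φ d - Φ c = ∫ s in c..d, φ s := hΦsub hc hd
    have h2 : 0 ≤ ∫ s in c..d, φ s :=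
      integral_nonneg hcd (fun u hu => hφ0 u (hmem hc hd hu))
    linarith
  have hΦcont : ContinuousOn Φ (Icc a b) := by
    have := continuousOn_primitive_interval (f := φ) (μ := volume) (a := a) (b := b)
      (by rwa [uIcc_of_le hab])
    rwa [uIcc_of_le hab] at this
  have hΦa : Φ a = 0 := integral_same
  have hΦ0 : ∀ t ∈ Icc a b, 0 ≤ Φ t := fun t ht =>
    integral_nonneg ht.1 (fun u hu => hφ0 u (hmem (left_mem_Icc.2 hab) ht hu))
  -- the partition
  set n : ℕ := ⌈(2 * Φ b)⌉₊ + 1 with hn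
  have hn0 : 0 < n := Nat.succ_pos _
  have hn0' : (0:ℝ) < n := by exact_mod_cast hn0
  set δ : ℝ := Φ b / n with hδdef
  have hδ0 : 0 ≤ δ := div_nonneg (hΦ0 b (right_mem_Icc.2 hab)) hn0'.le
  have hδhalf : δ ≤ 1/2 := by
    rw [hδdef, div_le_iff₀ hn0']
    have h1 : (2 * Φ b) ≤ (⌈(2 * Φ b)⌉₊ : ℝ) := Nat.le_ceil _
    have h2 : ((⌈(2 * Φ b)⌉₊ : ℝ)) ≤ (n:ℝ) := by
      rw [hn]; push_cast; linarith
    linarith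
  have hδn : (n:ℝ) * δ = Φ b := by
    rw [hδdef]; field_simp
  set S : ℕ → Set ℝ := fun i => {t ∈ Icc a b | (i:ℝ) * δ ≤ Φ t} with hSdef
  have hSb : ∀ i, i ≤ n → b ∈ S i := by
    intro i hi
    refine ⟨right_mem_Icc.2 hab, ?_⟩
    have : ((i:ℝ)) * δ ≤ (n:ℝ) * δ := by
      have : ((i:ℝ)) ≤ (n:ℝ) := by exact_mod_cast hi
      nlinarith
    linarith [hδn]
  have hSclosed : ∀ i, IsClosed (S i) := by
    intro i
    have : S i = Icc a b ∩ Φ ⁻¹' (Ici ((i:ℝ) * δ)) := rfl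
    rw [this]
    exact hΦcont.preimage_isClosed_of_isClosed isClosed_Icc isClosed_Ici
  have hSbdd : ∀ i, BddBelow (S i) := fun i =>
    (bddBelow_Icc : BddBelow (Icc a b)).mono (fun t ht => ht.1)
  set u : ℕ → ℝ := fun i => if i < n then sInf (S i) else b with hudef
  have huS : ∀ i, i < n → u i ∈ S i := by
    intro i hi
    have : u i = sInf (S i) := by rw [hudef]; simp [hi]
    rw [this]
    exact (hSclosed i).csInf_mem ⟨b, hSb i hi.le⟩ (hSbdd i)
  have humem : ∀ i, u i ∈ Icc a b := by
    intro i
    by_cases hi : i < n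
    · exact (huS i hi).1
    · have : u i = b := by rw [hudef]; simp [hi]
      rw [this]; exact right_mem_Icc.2 hab
  have hun : u n = b := by rw [hudef]; simp
  have hΦu : ∀ i, i ≤ n → Φ (u i) = (i:ℝ) * δ := by
    intro i hi
    by_cases hilt : i < n
    · have hmem1 := huS i hilt
      have hul : u i = sInf (S i) := by rw [hudef]; simp [hilt]
      -- find t with Φ t = i δ by IVT
      have hIVT := intermediate_value_Icc hab hΦcont
      have hiδmem : (i:ℝ) * δ ∈ Icc (Φ a) (Φ b) := by
        constructor
        · rw [hΦa]; positivity
        · rw [← hδn]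
          have : ((i:ℝ)) ≤ (n:ℝ) := by exact_mod_cast hi
          nlinarith
      obtain ⟨t, ht, hΦt⟩ := hIVT hiδmem
      have htS : t ∈ S i := ⟨ht, hΦt.ge⟩
      have hle : u i ≤ t := by rw [hul]; exact csInf_le (hSbdd i) htS
      have := hΦmono (humem i) ht hle
      have h2 := hmem1.2
      rw [hΦt] at this
      linarith
    · have : i = n := le_antisymm hi (not_lt.1 hilt)
      subst this
      rw [hun, ← hδn]
  have humono : ∀ i j, i ≤ j → u i ≤ u j := by
    intro i j hij
    by_cases hj : j < n
    · have hi : i < n := lt_of_le_of_lt hij hj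
      have h1 : u i = sInf (S i) := by rw [hudef]; simp [hi]
      have h2 : u j = sInf (S j) := by rw [hudef]; simp [hj]
      rw [h1, h2]
      refine csInf_le_csInf (hSbdd i) ⟨b, hSb j hj.le⟩ ?_
      intro t ht
      refine ⟨ht.1, ?_⟩
      have : ((i:ℝ)) ≤ (j:ℝ) := by exact_mod_cast hij
      nlinarith [ht.2]
    · have : u j = b := by rw [hudef]; simp [hj]
      rw [this]; exact (humem i).2
  -- local estimate
  have hE1 : ∀ {c d : ℝ}, c ∈ Icc a b → d ∈ Icc a b → c ≤ d →
      (∫ s in c..d, φ s * f s) ≤ f d * (Φ d - Φ c) := by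
    intro c d hc hd hcd
    have h1 : (∫ s in c..d, φ s * f s) ≤ ∫ s in c..d, f d * φ s := by
      refine integral_mono_on hcd (hintf hc hd)
        ((hint hc hd).const_mul _) ?_
      intro s hs
      have hs' := hmem hc hd hs
      have := hfmono hs' hd hs.2
      nlinarith [hφ0 s hs', hf0 s hs']
    have h2 : (∫ s in c..d, f d * φ s) = f d * ∫ s in c..d, φ s :=
      integral_const_mul _ _
    rw [h2, ← hΦsub hc hd] at h1
    exact h1
  -- main induction
  have key : ∀ i, i ≤ n →
      ((∫ s in a..(u i), φ s * f s) ≤ ((1 + 2*δ)^i - 1) * L (u i)) ∧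
      (∀ t ∈ Icc a (u i), f t ≤ 2 * (1 + 2*δ)^i * L t) := by
    intro i
    induction i with
    | zero =>
      intro _
      have hu0 : u 0 = a := by
        have h1 := (huS 0 hn0).1.1
        have h2 : u 0 = sInf (S 0) := by rw [hudef]; simp [hn0]
        have h3 : a ∈ S 0 := by
          refine ⟨left_mem_Icc.2 hab, ?_⟩
          simp [hΦa]
        have h4 : u 0 ≤ a := by rw [h2]; exact csInf_le (hSbdd 0) h3
        linarith
      constructor
      · rw [hu0]; simp
      · intro t ht
        rw [hu0] at ht
        have hta : t = a := le_antisymm ht.2 ht.1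
        subst hta
        have := hineq t (left_mem_Icc.2 hab)
        simp only [integral_same] at this
        have hL := hL0 t (left_mem_Icc.2 hab)
        simp only [pow_zero]
        linarith
    | succ i ih =>
      intro hin
      have hi : i ≤ n := Nat.le_of_succ_le hin
      obtain ⟨ih1, ih2⟩ := ih hi
      have hpow1 : (1:ℝ) ≤ (1 + 2*δ)^i := one_le_pow₀ (by linarith)
      have hpow2 : ((1:ℝ) + 2*δ)^i ≤ (1 + 2*δ)^(i+1) := by
        calc ((1:ℝ) + 2*δ)^i = (1 + 2*δ)^i * 1 := (mul_one _).symm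
        _ ≤ (1 + 2*δ)^i * (1 + 2*δ) := by nlinarith
        _ = (1 + 2*δ)^(i+1) := (pow_succ _ _).symm
      -- the sup bound on [u i, u (i+1)]
      have hQ : ∀ t ∈ Icc (u i) (u (i+1)), f t ≤ 2 * (1 + 2*δ)^i * L t := by
        intro t ht
        have htab : t ∈ Icc a b := hmem (humem i) (humem (i+1)) ht
        have hsplit : (∫ s in a..t, φ s * f s) =
            (∫ s in a..(u i), φ s * f s) + ∫ s in (u i)..t, φ s * f s :=
          (integral_add_adjacent_intervals (hintf (left_mem_Icc.2 hab) (humem i))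
            (hintf (humem i) htab)).symm
        have hE := hE1 (humem i) htab ht.1
        have hΦdiff : Φ t - Φ (u i) ≤ δ := by
          have h1 := hΦmono htab (humem (i+1)) ht.2
          have h2 := hΦu i hi
          have h3 := hΦu (i+1) hin
          push_cast at h3
          linarith
        have hft := hf0 t htab
        have hLt := hL0 t htab
        have hLui : L (u i) ≤ L t := hLmono (humem i) htab ht.1
        have h5 := hineq t htab
        rw [hsplit] at h5
        -- f t ≤ L t + ((1+2δ)^i - 1) L t + f t * δ
        have h6 : f t ≤ L t + ((1 + 2*δ)^i - 1) * L t + f t * δ := by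
          have hE' : (∫ s in (u i)..t, φ s * f s) ≤ f t * δ := by
            have := mul_le_mul_of_nonneg_left hΦdiff hft
            linarith [hE]
          have hih : (∫ s in a..(u i), φ s * f s) ≤ ((1 + 2*δ)^i - 1) * L t := by
            have : ((1 + 2*δ)^i - 1) * L (u i) ≤ ((1 + 2*δ)^i - 1) * L t :=
              mul_le_mul_of_nonneg_left hLui (by linarith)
            linarith
          linarith
        have h9 : f t * δ ≤ f t * (1/2) := mul_le_mul_of_nonneg_left hδhalf hft
        linarith
      refine ⟨?_, ?_⟩
      · -- integral bound at u (i+1)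
        have hsplit : (∫ s in a..(u (i+1)), φ s * f s) =
            (∫ s in a..(u i), φ s * f s) + ∫ s in (u i)..(u (i+1)), φ s * f s :=
          (integral_add_adjacent_intervals (hintf (left_mem_Icc.2 hab) (humem i))
            (hintf (humem i) (humem (i+1)))).symm
        have hE := hE1 (humem i) (humem (i+1)) (humono i (i+1) (Nat.le_succ _))
        have hΦdiff : Φ (u (i+1)) - Φ (u i) = δ := by
          have h2 := hΦu i hi
          have h3 := hΦu (i+1) hin
          push_cast at h3
          linarith
        rw [hΦdiff] at hE
        have hfu := hQ (u (i+1)) ⟨humono i (i+1) (Nat.le_succ _), le_refl _⟩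
        have hLui : L (u i) ≤ L (u (i+1)) :=
          hLmono (humem i) (humem (i+1)) (humono i (i+1) (Nat.le_succ _))
        have hLu1 := hL0 (u (i+1)) (humem (i+1))
        have hfu1 := hf0 (u (i+1)) (humem (i+1))
        rw [hsplit]
        have h7 : (∫ s in (u i)..(u (i+1)), φ s * f s) ≤ 2 * (1 + 2*δ)^i * L (u (i+1)) * δ := by
          have := mul_le_mul_of_nonneg_right hfu hδ0
          linarith
        have h8 : (∫ s in a..(u i), φ s * f s) ≤ ((1 + 2*δ)^i - 1) * L (u (i+1)) := by
          have : ((1 + 2*δ)^i - 1) * L (u i) ≤ ((1 + 2*δ)^i - 1) * L (u (i+1)) :=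
            mul_le_mul_of_nonneg_left hLui (by linarith)
          linarith
        have hps : ((1 + 2*δ)^(i+1) - 1) * L (u (i+1)) =
            ((1 + 2*δ)^i - 1) * L (u (i+1)) + 2 * (1 + 2*δ)^i * L (u (i+1)) * δ := by
          rw [pow_succ]; ring
        linarith
      · intro t ht
        have htab : t ∈ Icc a b := hmem (left_mem_Icc.2 hab) (humem (i+1)) ht
        have hLt := hL0 t htab
        have hmono : 2 * (1 + 2*δ)^i * L t ≤ 2 * (1 + 2*δ)^(i+1) * L t := by
          have := mul_le_mul_of_nonneg_right hpow2 hLt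
          linarith
        by_cases htu : t ≤ u i
        · have := ih2 t ⟨ht.1, htu⟩
          linarith
        · have := hQ t ⟨le_of_not_ge htu, ht.2⟩
          linarith
  -- conclude
  intro t ht
  obtain ⟨_, key2⟩ := key n (le_refl n)
  rw [hun] at key2
  have h1 := key2 t ht
  have hexp : ((1:ℝ) + 2*δ)^n ≤ Real.exp (2 * Φ b) := by
    have h2 : ((1:ℝ) + 2*δ) ≤ Real.exp (2*δ) := by
      have := Real.add_one_le_exp (2*δ)
      linarith
    have h3 : ((1:ℝ) + 2*δ)^n ≤ (Real.exp (2*δ))^n :=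
      pow_le_pow_left₀ (by linarith) h2 n
    have h4 : (Real.exp (2*δ))^n = Real.exp ((n:ℝ) * (2*δ)) := (Real.exp_nat_mul _ _).symm
    rw [h4] at h3
    have h5 : (n:ℝ) * (2*δ) = 2 * Φ b := by rw [← hδn]; ring
    rwa [h5] at h3
  have hLt := hL0 t ht
  calc f t ≤ 2 * (1 + 2*δ)^n * L t := h1
    _ ≤ 2 * Real.exp (2 * Φ b) * L t := by
          have := mul_le_mul_of_nonneg_right hexp hLt
          linarith
    _ = 2 * L t * Real.exp (2 * ∫ s in a..b, φ s) := by rw [hΦdef]; ring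

/-- Extended Gronwall lemma (case `p = 2`): if a bounded, nonnegative, nondecreasing
function `f` satisfies `f t ≤ ℓ t + ∫ₐᵗ g f + (∫ₐᵗ h f²)^{1/2}` with `ℓ` nonnegative
nondecreasing and `g, h` nonnegative integrable, then
`f t ≤ 4 ℓ t · exp(4 ∫ₐᵇ g + 8 ∫ₐᵇ h)` on `[a, b]`. -/
theorem stmt15 (a b : ℝ) (hab : a ≤ b) (f ℓ g h : ℝ → ℝ)
    (hf0 : ∀ t ∈ Icc a b, 0 ≤ f t) (hfmono : MonotoneOn f (Icc a b))
    (hℓ0 : ∀ t ∈ Icc a b, 0 ≤ ℓ t) (hℓmono : MonotoneOn ℓ (Icc a b))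
    (hg0 : ∀ t ∈ Icc a b, 0 ≤ g t) (hh0 : ∀ t ∈ Icc a b, 0 ≤ h t)
    (hg : IntegrableOn g (Icc a b)) (hh : IntegrableOn h (Icc a b))
    (M : ℝ) (hfbdd : ∀ t ∈ Icc a b, f t ≤ M)
    (hineq : ∀ t ∈ Icc a b,
      f t ≤ ℓ t + (∫ s in a..t, g s * f s) + Real.sqrt (∫ s in a..t, h s * f s ^ 2)) :
    ∀ t ∈ Icc a b,
      f t ≤ 4 * ℓ t * Real.exp (4 * (∫ s in a..b, g s) + 8 * (∫ s in a..b, h s)) := by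
  -- measurability and integrability facts
  set M' : ℝ := max M 0 with hM'def
  have hfM' : ∀ t ∈ Icc a b, f t ≤ M' := fun t ht => (hfbdd t ht).trans (le_max_left _ _)
  have hfaem : AEMeasurable f (volume.restrict (Icc a b)) :=
    aemeasurable_restrict_of_monotoneOn measurableSet_Icc hfmono
  have hfsm : AEStronglyMeasurable f (volume.restrict (Icc a b)) := hfaem.aestronglyMeasurable
  have hbound : ∀ᵐ x ∂(volume.restrict (Icc a b)), ‖f x‖ ≤ M' :=
    ae_restrict_of_forall_mem measurableSet_Icc (fun x hx => by
      rw [Real.norm_eq_abs, abs_of_nonneg (hf0 x hx)]; exact hfM' x hx)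
  have hf2sm : AEStronglyMeasurable (fun x => f x ^ 2) (volume.restrict (Icc a b)) :=
    (hfaem.pow_const 2).aestronglyMeasurable
  have hbound2 : ∀ᵐ x ∂(volume.restrict (Icc a b)), ‖f x ^ 2‖ ≤ M' ^ 2 :=
    ae_restrict_of_forall_mem measurableSet_Icc (fun x hx => by
      have h1 := hf0 x hx
      have h2 := hfM' x hx
      rw [Real.norm_eq_abs, abs_of_nonneg (by positivity)]
      nlinarith)
  have hgf : IntegrableOn (fun s => g s * f s) (Icc a b) :=
    (hg.bdd_mul hfsm hbound).congr (Filter.Eventually.of_forall fun x => mul_comm _ _)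
  have hhf : IntegrableOn (fun s => h s * f s) (Icc a b) :=
    (hh.bdd_mul hfsm hbound).congr (Filter.Eventually.of_forall fun x => mul_comm _ _)
  have hhf2 : IntegrableOn (fun s => h s * f s ^ 2) (Icc a b) :=
    (hh.bdd_mul hf2sm hbound2).congr (Filter.Eventually.of_forall fun x => mul_comm _ _)
  have hiv : ∀ (F : ℝ → ℝ), IntegrableOn F (Icc a b) → ∀ t ∈ Icc a b,
      IntervalIntegrable F volume a t := fun F hF t ht =>
    (hF.mono_set (uIcc_subset_Icc (left_mem_Icc.2 hab) ht)).intervalIntegrable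
  -- the reduced data
  set L : ℝ → ℝ := fun t => (4/3) * ℓ t with hLdef
  set φ : ℝ → ℝ := fun s => (4/3) * (g s + h s) with hφdef
  have hL0 : ∀ t ∈ Icc a b, 0 ≤ L t := fun t ht =>
    mul_nonneg (by norm_num) (hℓ0 t ht)
  have hLmono : MonotoneOn L (Icc a b) := fun s hs t ht hst =>
    mul_le_mul_of_nonneg_left (hℓmono hs ht hst) (by norm_num)
  have hφ0 : ∀ t ∈ Icc a b, 0 ≤ φ t := fun t ht =>
    mul_nonneg (by norm_num) (by linarith [hg0 t ht, hh0 t ht])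
  have hφint : IntegrableOn φ (Icc a b) := (hg.add hh).const_mul _
  have hφf : IntegrableOn (fun s => φ s * f s) (Icc a b) := by
    have heq : (fun s => φ s * f s) = fun s => (4/3) * (g s * f s + h s * f s) := by
      funext s; simp only [hφdef]; ring
    rw [heq]
    exact (hgf.add hhf).const_mul _
  -- the reduced inequality
  have hineq' : ∀ t ∈ Icc a b, f t ≤ L t + ∫ s in a..t, φ s * f s := by
    intro t ht
    have htIcc : ∀ {s : ℝ}, s ∈ Icc a t → s ∈ Icc a b := fun hs => ⟨hs.1, hs.2.trans ht.2⟩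
    have hi1 := hiv _ hgf t ht
    have hi2 := hiv _ hhf t ht
    have hi3 := hiv _ hhf2 t ht
    have hB0 : 0 ≤ ∫ s in a..t, h s * f s :=
      integral_nonneg ht.1 (fun s hs => mul_nonneg (hh0 s (htIcc hs)) (hf0 s (htIcc hs)))
    have hstep1 : (∫ s in a..t, h s * f s ^ 2) ≤ f t * ∫ s in a..t, h s * f s := by
      have h1 : (∫ s in a..t, h s * f s ^ 2) ≤ ∫ s in a..t, f t * (h s * f s) := by
        refine integral_mono_on ht.1 hi3 (hi2.const_mul _) ?_
        intro s hs
        have h2 := hfmono (htIcc hs) ht hs.2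
        have h3 : (h s * f s) * f s ≤ (h s * f s) * f t :=
          mul_le_mul_of_nonneg_left h2 (mul_nonneg (hh0 s (htIcc hs)) (hf0 s (htIcc hs)))
        nlinarith [h3]
      rwa [intervalIntegral.integral_const_mul] at h1
    have hft := hf0 t ht
    have hsqrt : Real.sqrt (∫ s in a..t, h s * f s ^ 2) ≤
        f t / 4 + ∫ s in a..t, h s * f s := by
      have h1 : Real.sqrt (∫ s in a..t, h s * f s ^ 2) ≤
          Real.sqrt (f t * ∫ s in a..t, h s * f s) := Real.sqrt_le_sqrt hstep1
      have h2 : Real.sqrt (f t * ∫ s in a..t, h s * f s) ≤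
          f t / 4 + ∫ s in a..t, h s * f s := by
        rw [Real.sqrt_mul hft]
        nlinarith [sq_nonneg (Real.sqrt (f t) / 2 - Real.sqrt (∫ s in a..t, h s * f s)),
          Real.sq_sqrt hft, Real.sq_sqrt hB0,
          Real.sqrt_nonneg (f t), Real.sqrt_nonneg (∫ s in a..t, h s * f s)]
      linarith
    have hφeq : (∫ s in a..t, φ s * f s) =
        (4/3) * ((∫ s in a..t, g s * f s) + ∫ s in a..t, h s * f s) := by
      have heq : (fun s => φ s * f s) = fun s => (4/3) * (g s * f s + h s * f s) := by
        funext s; simp only [hφdef]; ring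
      rw [heq, intervalIntegral.integral_const_mul, integral_add hi1 hi2]
    have h0 := hineq t ht
    rw [hφeq]
    simp only [hLdef]
    linarith
  -- apply the Gronwall lemma
  have key := gronwall_aux a b hab f L φ hf0 hfmono hL0 hLmono hφ0 hφint hφf hineq'
  intro t ht
  have h1 := key t ht
  have hG : 0 ≤ ∫ s in a..b, g s := integral_nonneg hab hg0
  have hH : 0 ≤ ∫ s in a..b, h s := integral_nonneg hab hh0
  have hφb : (∫ s in a..b, φ s) = (4/3) * ((∫ s in a..b, g s) + ∫ s in a..b, h s) := by
    have heq : φ = fun s => (4/3) * (g s + h s) := hφdef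
    rw [heq, intervalIntegral.integral_const_mul,
      integral_add (hiv _ hg b (right_mem_Icc.2 hab)) (hiv _ hh b (right_mem_Icc.2 hab))]
  have hexp : Real.exp (2 * ∫ s in a..b, φ s) ≤
      Real.exp (4 * (∫ s in a..b, g s) + 8 * (∫ s in a..b, h s)) := by
    refine Real.exp_le_exp.2 ?_
    rw [hφb]; linarith
  have hlt := hℓ0 t ht
  calc f t ≤ 2 * L t * Real.exp (2 * ∫ s in a..b, φ s) := h1
    _ = (8/3) * ℓ t * Real.exp (2 * ∫ s in a..b, φ s) := by simp only [hLdef]; ring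
    _ ≤ 4 * ℓ t * Real.exp (4 * (∫ s in a..b, g s) + 8 * (∫ s in a..b, h s)) := by
        have e1 : (8/3) * ℓ t ≤ 4 * ℓ t := by linarith
        have := mul_le_mul e1 hexp (Real.exp_nonneg _) (by linarith)
        linarith
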